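/- Let n ≥ 3 and let E ∈ M_n(𝕋) be the matrix all of whose entries equal 0 ∈ ℝ. If D ∈ M_n(𝕋) is a noncentral diagonal matrix two of whose diagonal entries are equal (d_{i,i} = d_{j,j} for some i ≠ j), then the distance between D and E in the commuting graph Γ(M_n(𝕋)) is at most 2. -/

import Mathlib

/-- The commuting graph of the semiring of `n × n` matrices over `R`: vertices are the
noncentral matrices, and two distinct vertices are adjacent iff they commute. -/
def commGraph (R : Type*) [Semiring R] (n : ℕ) :
    SimpleGraph {X : Matrix (Fin n) (Fin n) R // ¬ ∀ Y, X * Y = Y * X} where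
  Adj X Y := X ≠ Y ∧ X.1 * Y.1 = Y.1 * X.1
  symm := ⟨fun _ _ h => ⟨fun e => h.1 e.symm, h.2.symm⟩⟩
  loopless := ⟨fun _ h => h.1 rfl⟩


/-- The max-plus tropical semiring `ℝ ∪ {-∞}`, realized as the `Tropical` semiring on the
order dual of `WithBot ℝ`. -/
noncomputable instance : LinearOrderedAddCommMonoidWithTop ((WithBot ℝ)ᵒᵈ) :=
  { (inferInstance : AddCommMonoid ((WithBot ℝ)ᵒᵈ)),
    (inferInstance : LinearOrder ((WithBot ℝ)ᵒᵈ)),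
    (inferInstance : IsOrderedAddMonoid ((WithBot ℝ)ᵒᵈ)),
    (inferInstance : OrderTop ((WithBot ℝ)ᵒᵈ)) with
    top_add' := fun a => WithBot.bot_add a
    isAddLeftRegular_of_ne_top := fun _a ha _b _c h => WithBot.add_left_cancel ha h }

abbrev Trop : Type := Tropical ((WithBot ℝ)ᵒᵈ)

lemma trop_zero_ne_one : (0 : Trop) ≠ 1 := by
  intro h
  have h2 := congrArg Tropical.untrop h
  rw [Tropical.untrop_zero, Tropical.untrop_one] at h2
  have : (⊥ : WithBot ℝ) = ((0 : ℝ) : WithBot ℝ) := h2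
  exact (WithBot.bot_ne_coe) this

/-- For `n ≥ 3`, if `D ∈ M_n(𝕋)` is a noncentral diagonal matrix with two equal diagonal
entries, then the distance between `D` and the all-ones matrix `E` in `Γ(M_n(𝕋))` is at
most 2. -/
theorem dist_le_two_of_diagonal_repeated (n : ℕ) (hn : 3 ≤ n)
    (D E : Matrix (Fin n) (Fin n) Trop) (hEdef : ∀ i j, E i j = 1)
    (hdiag : ∀ i j : Fin n, i ≠ j → D i j = 0)
    (i j : Fin n) (hij : i ≠ j) (heq : D i i = D j j)
    (hD : ¬ ∀ Y, D * Y = Y * D) (hE : ¬ ∀ Y, E * Y = Y * E) :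
    (commGraph Trop n).edist ⟨D, hD⟩ ⟨E, hE⟩ ≤ 2 := by
  classical
  set σ := Equiv.swap i j with hσ
  set M : Matrix (Fin n) (Fin n) Trop := fun k l => if σ k = l then 1 else 0 with hMdef
  have hMapp : ∀ k l, M k l = if σ k = l then 1 else 0 := fun k l => rfl
  -- rows and columns of M sum (tropically) to 1
  have hrow : ∀ k : Fin n, (∑ m, M k m) = 1 := by
    intro k
    rw [Finset.sum_eq_single (σ k)]
    · simp [hMapp]
    · intro m _ hm
      rw [hMapp]
      exact if_neg fun h => hm h.symm
    · intro h; exact absurd (Finset.mem_univ _) h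
  have hcol : ∀ l : Fin n, (∑ m, M m l) = 1 := by
    intro l
    rw [Finset.sum_eq_single (σ l)]
    · rw [hMapp, if_pos (Equiv.swap_apply_self i j l)]
    · intro m _ hm
      rw [hMapp]
      refine if_neg fun h => hm ?_
      rw [← h, Equiv.swap_apply_self]
    · intro h; exact absurd (Finset.mem_univ _) h
  -- M commutes with E
  have hEM : E * M = M * E := by
    ext k l
    rw [Matrix.mul_apply, Matrix.mul_apply]
    simp only [hEdef, one_mul, mul_one]
    rw [hcol l, hrow k]
  -- M commutes with D
  have hDM : D * M = M * D := by
    ext k l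
    rw [Matrix.mul_apply, Matrix.mul_apply,
      Finset.sum_eq_single k (fun m _ hm => by rw [hdiag k m (fun h => hm h.symm), zero_mul])
        (fun h => absurd (Finset.mem_univ _) h),
      Finset.sum_eq_single l (fun m _ hm => by rw [hdiag m l hm, mul_zero])
        (fun h => absurd (Finset.mem_univ _) h)]
    by_cases h : σ k = l
    · have hDkl : D k k = D l l := by
        subst h
        by_cases hk : k = i
        · subst hk; rw [hσ, Equiv.swap_apply_left]; exact heq
        · by_cases hk' : k = j
          · subst hk'; rw [hσ, Equiv.swap_apply_right]; exact heq.symm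
          · rw [hσ, Equiv.swap_apply_of_ne_of_ne hk hk']
      rw [hMapp, if_pos h, hDkl, mul_comm]
    · rw [hMapp, if_neg h, mul_zero, zero_mul]
  -- M is not central
  have hM : ¬ ∀ Y, M * Y = Y * M := by
    intro h
    set Y : Matrix (Fin n) (Fin n) Trop := fun k l => if k = i ∧ l = i then 1 else 0 with hYdef
    have h2 := congrFun (congrFun (h Y) j) i
    rw [Matrix.mul_apply, Matrix.mul_apply] at h2
    rw [Finset.sum_eq_single i (fun m _ hm => by
        show M j m * (if m = i ∧ i = i then (1:Trop) else 0) = 0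
        rw [if_neg (fun hc => hm hc.1), mul_zero])
        (fun h => absurd (Finset.mem_univ _) h)] at h2
    rw [Finset.sum_eq_zero (fun m _ => by
        show (if j = i ∧ m = i then (1:Trop) else 0) * M m i = 0
        rw [if_neg (fun hc => hij hc.1.symm), zero_mul])] at h2
    rw [hMapp, if_pos (Equiv.swap_apply_right i j), hYdef] at h2
    simp only [and_self, if_pos rfl, one_mul] at h2
    exact trop_zero_ne_one h2.symm
  -- adjacency D -- M
  have adj1 : (commGraph Trop n).Adj ⟨D, hD⟩ ⟨M, hM⟩ := by
    refine ⟨fun hDM' => ?_, hDM⟩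
    have h3 : D i j = M i j := congrFun (congrFun (congrArg Subtype.val hDM') i) j
    rw [hdiag i j hij, hMapp, if_pos (Equiv.swap_apply_left i j)] at h3
    exact trop_zero_ne_one h3
  -- adjacency M -- E
  have adj2 : (commGraph Trop n).Adj ⟨M, hM⟩ ⟨E, hE⟩ := by
    refine ⟨fun hME' => ?_, hEM.symm⟩
    have h3 : M i i = E i i := congrFun (congrFun (congrArg Subtype.val hME') i) i
    rw [hEdef, hMapp, if_neg (by rw [Equiv.swap_apply_left]; exact fun h => hij h.symm)] at h3
    exact trop_zero_ne_one h3
  -- build a walk of length 2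
  have hle := SimpleGraph.edist_le
    (SimpleGraph.Walk.cons adj1 (SimpleGraph.Walk.cons adj2 SimpleGraph.Walk.nil))
  simpa using hle
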